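/- If pw ≥ rc + cw + cc, then the map n ↦ P·(1 + f_min(n))/(q(n) + r(n) + f_min(n) + 1) is nondecreasing in the expansion e(n), where q(n) = ⌊(pw + e)/(rlw_min + e)⌋, r(n) = (pw + e)/(rlw_min + e) − q(n), rlw_min = rc + cw + cc, f_min = max(0, P − q − 1), and e is a nondecreasing function of n. -/
import Mathlib


/-- Monotonicity of the average-number-of-threads map in the expansion `e`:
with `ρ(e) = (pw + e)/(w + e)` (`w = rc + cw + cc`), `q(e) = ⌊ρ(e)⌋`,
`f_min(e) = max 0 (P - 1 - q(e))`, if `pw ≥ w` then `ρ` is nonincreasing,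
`q` is nonincreasing, `f_min` is nondecreasing, and
`e ↦ P (1 + f_min(e)) / (ρ(e) + 1 + f_min(e))` is nondecreasing on `[0, ∞)`. -/
theorem avg_threads_map_monotone
    (P : ℕ) (pw rc cw cc : ℝ)
    (hP : 1 ≤ P) (hrc : 0 < rc) (hcw : 0 < cw) (hcc : 0 < cc)
    (hpw : rc + cw + cc ≤ pw) :
    AntitoneOn (fun e : ℝ => (pw + e) / (rc + cw + cc + e)) (Set.Ici 0) ∧
    AntitoneOn (fun e : ℝ => ⌊(pw + e) / (rc + cw + cc + e)⌋) (Set.Ici 0) ∧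
    MonotoneOn (fun e : ℝ => max 0 ((P : ℤ) - 1 - ⌊(pw + e) / (rc + cw + cc + e)⌋))
      (Set.Ici 0) ∧
    MonotoneOn
      (fun e : ℝ =>
        (P : ℝ) * (1 + (max 0 ((P : ℤ) - 1 - ⌊(pw + e) / (rc + cw + cc + e)⌋) : ℝ)) /
          ((pw + e) / (rc + cw + cc + e) + 1 +
            (max 0 ((P : ℤ) - 1 - ⌊(pw + e) / (rc + cw + cc + e)⌋) : ℝ)))
      (Set.Ici 0) := by
  have hw0 : 0 < rc + cw + cc := by linarith
  have hρanti : AntitoneOn (fun e : ℝ => (pw + e) / (rc + cw + cc + e)) (Set.Ici 0) := by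
    intro x hx y hy hxy
    have hx0 : (0:ℝ) ≤ x := hx
    have hy0 : (0:ℝ) ≤ y := hy
    have hwx : 0 < rc + cw + cc + x := by linarith
    have hwy : 0 < rc + cw + cc + y := by linarith
    simp only
    rw [div_le_div_iff₀ hwy hwx]
    nlinarith
  have hqanti : AntitoneOn (fun e : ℝ => ⌊(pw + e) / (rc + cw + cc + e)⌋) (Set.Ici 0) := by
    intro x hx y hy hxy
    exact Int.floor_le_floor (hρanti hx hy hxy)
  have hfmono : MonotoneOn
      (fun e : ℝ => max 0 ((P : ℤ) - 1 - ⌊(pw + e) / (rc + cw + cc + e)⌋)) (Set.Ici 0) := by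
    intro x hx y hy hxy
    have := hqanti hx hy hxy
    simp only at this ⊢
    exact max_le_max le_rfl (by omega)
  have hρ1 : ∀ e ∈ Set.Ici (0:ℝ), 1 ≤ (pw + e) / (rc + cw + cc + e) := by
    intro e he
    have he0 : (0:ℝ) ≤ e := he
    rw [le_div_iff₀ (by linarith)]
    linarith
  refine ⟨hρanti, hqanti, hfmono, ?_⟩
  intro x hx y hy hxy
  set Fx : ℝ := (max 0 ((P : ℤ) - 1 - ⌊(pw + x) / (rc + cw + cc + x)⌋) : ℝ) with hFx
  set Fy : ℝ := (max 0 ((P : ℤ) - 1 - ⌊(pw + y) / (rc + cw + cc + y)⌋) : ℝ) with hFy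
  set ρx : ℝ := (pw + x) / (rc + cw + cc + x) with hρx
  set ρy : ℝ := (pw + y) / (rc + cw + cc + y) with hρy
  have hFxy : Fx ≤ Fy := by
    have h := hfmono hx hy hxy
    simp only at h
    rw [hFx, hFy]
    exact_mod_cast h
  have hFx0 : 0 ≤ Fx := by
    rw [hFx]; exact_mod_cast le_max_left _ _
  have hρxy : ρy ≤ ρx := hρanti hx hy hxy
  have hρy1 : 1 ≤ ρy := hρ1 y hy
  have hρx1 : 1 ≤ ρx := hρ1 x hx
  simp only
  rw [div_le_div_iff₀ (by linarith) (by linarith)]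
  have hP0 : (0:ℝ) ≤ (P:ℝ) := by positivity
  nlinarith [mul_le_mul hFxy hρxy (by linarith) (by linarith)]
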